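/- If p̄ = pm ≥ 2·l_max, then the wrapped matrix B contains no rectangle of ones: there do not exist i < j and k < l with b_{ik} = b_{il} = b_{jk} = b_{jl} = 1. Consequently any two distinct rows of B, viewed as blocks (sets of column indices where they are 1), intersect in at most one column. -/
import Mathlib

set_option maxHeartbeats 1000000

private lemma shiftP (a : ℕ → ℕ → Bool) (p pp : ℕ)
    (hper : ∀ i j, pp < i → pp < j → a (i + p) (j + p) = a i j) :
    ∀ s i j, pp < i → pp < j → a (i + p * s) (j + p * s) = a i j := by
  intro s
  induction s with
  | zero => simp
  | succ s ih =>
    intro i j hi hj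
    have e1 : i + p * (s + 1) = i + p * s + p := by ring
    have e2 : j + p * (s + 1) = j + p * s + p := by ring
    rw [e1, e2, hper (i + p * s) (j + p * s) (by omega) (by omega), ih i j hi hj]

/-- Theorem 4.4: if `p̄ = p·m ≥ 2·l_max`, the wrapped matrix `B` contains no rectangle
of ones; consequently any two distinct rows of `B`, viewed as blocks, meet in at most
one column. -/
theorem stmt12 (n p pp bb lmax m v pbar r : ℕ) (a B : ℕ → ℕ → Bool)
    (hp : 1 ≤ p) (hm : 1 ≤ m)
    (hsym : ∀ i j, 1 ≤ i → 1 ≤ j → a i j = a j i)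
    (hper : ∀ i j, pp < i → pp < j → a (i + p) (j + p) = a i j)
    (hnorect : ¬ ∃ i j i' j', 1 ≤ i ∧ 1 ≤ j ∧ 1 ≤ i' ∧ 1 ≤ j' ∧ i ≠ i' ∧ j ≠ j' ∧
      a i j = true ∧ a i j' = true ∧ a i' j = true ∧ a i' j' = true)
    (hrow : ∀ i, 1 ≤ i → {j : ℕ | 1 ≤ j ∧ a i j = true}.ncard = n + 1)
    (hlmax : ∀ i j1 j2, pp < i → 1 ≤ j1 → a i j1 = true → a i j2 = true →
      j2 + 1 ≤ j1 + lmax)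
    (hbreadth : ∀ i j, pp < i → 1 ≤ j → a i j = true → j ≤ i + bb ∧ i ≤ j + bb)
    (hpbar : pbar = p * m) (hrdef : r = pbar / 2) (hbr : bb < r)
    (hv : pp + pbar ≤ v)
    (hB : ∀ i j, 1 ≤ i → i ≤ pbar → 1 ≤ j → j ≤ pbar →
      B i j = if j ≤ i + r ∧ i ≤ j + r then a (v + i) (v + j)
              else if i + r < j then a (v + i) (v + j - pbar)
              else a (v + i) (v + j + pbar))
    (hlen : 2 * lmax ≤ pbar) :
    (¬ ∃ i j k l, 1 ≤ i ∧ i < j ∧ j ≤ pbar ∧ 1 ≤ k ∧ k < l ∧ l ≤ pbar ∧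
      B i k = true ∧ B i l = true ∧ B j k = true ∧ B j l = true) ∧
    ∀ i j, 1 ≤ i → i ≤ pbar → 1 ≤ j → j ≤ pbar → i ≠ j →
      ((Finset.Icc 1 pbar).filter (fun c => B i c = true ∧ B j c = true)).card ≤ 1 := by
  have hshift : ∀ x y, pp < x → pp < y → a (x + pbar) (y + pbar) = a x y := by
    intro x y hx hy
    rw [hpbar]
    exact shiftP a p pp hper m x y hx hy
  have hentry : ∀ i k, 1 ≤ i → i ≤ pbar → 1 ≤ k → k ≤ pbar → B i k = true →
      ∃ c, pp < c ∧ a (v + i) c = true ∧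
        (c = v + k ∨ (c + pbar = v + k ∧ i + r < k) ∨ (c = v + k + pbar ∧ k + r < i)) := by
    intro i k hi1 hi2 hk1 hk2 hBik
    rw [hB i k hi1 hi2 hk1 hk2] at hBik
    by_cases h1 : k ≤ i + r ∧ i ≤ k + r
    · rw [if_pos h1] at hBik
      exact ⟨v + k, by omega, hBik, Or.inl rfl⟩
    · rw [if_neg h1] at hBik
      by_cases h2 : i + r < k
      · rw [if_pos h2] at hBik
        exact ⟨v + k - pbar, by omega, hBik, Or.inr (Or.inl ⟨by omega, h2⟩)⟩
      · rw [if_neg h2] at hBik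
        exact ⟨v + k + pbar, by omega, hBik, Or.inr (Or.inr ⟨rfl, by omega⟩)⟩
  have hrect : ¬ ∃ i j k l, 1 ≤ i ∧ i < j ∧ j ≤ pbar ∧ 1 ≤ k ∧ k < l ∧ l ≤ pbar ∧
      B i k = true ∧ B i l = true ∧ B j k = true ∧ B j l = true := by
    rintro ⟨i, j, k, l, hi1, hij, hj2, hk1, hkl, hl2, hik, hil, hjk, hjl⟩
    obtain ⟨c1, hc1pp, hac1, hc1⟩ :=
      hentry i k (by omega) (by omega) (by omega) (by omega) hik
    obtain ⟨c2, hc2pp, hac2, hc2⟩ :=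
      hentry i l (by omega) (by omega) (by omega) (by omega) hil
    obtain ⟨d1, hd1pp, had1, hd1⟩ :=
      hentry j k (by omega) (by omega) (by omega) (by omega) hjk
    obtain ⟨d2, hd2pp, had2, hd2⟩ :=
      hentry j l (by omega) (by omega) (by omega) (by omega) hjl
    have hlm1 : 1 ≤ lmax := by
      have := hlmax (v + i) c1 c1 (by omega) (by omega) hac1 hac1
      omega
    have h12a : c2 + 1 ≤ c1 + lmax :=
      hlmax (v + i) c1 c2 (by omega) (by omega) hac1 hac2
    have h12b : c1 + 1 ≤ c2 + lmax :=
      hlmax (v + i) c2 c1 (by omega) (by omega) hac2 hac1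
    have h34a : d2 + 1 ≤ d1 + lmax :=
      hlmax (v + j) d1 d2 (by omega) (by omega) had1 had2
    have h34b : d1 + 1 ≤ d2 + lmax :=
      hlmax (v + j) d2 d1 (by omega) (by omega) had2 had1
    have h2r : pbar ≤ 2 * r + 1 := by omega
    clear hrdef hik hil hjk hjl hbr hlm1
    have hne : c1 ≠ c2 := by
      rcases hc1 with h | ⟨h, hs⟩ | ⟨h, hs⟩ <;> rcases hc2 with h' | ⟨h', hs'⟩ | ⟨h', hs'⟩ <;>
        omega
    have hA : d1 = c1 ∨ d1 = c1 + pbar ∨ d1 + pbar = c1 := by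
      rcases hc1 with h | ⟨h, hs⟩ | ⟨h, hs⟩ <;> rcases hd1 with h' | ⟨h', hs'⟩ | ⟨h', hs'⟩ <;>
        omega
    have hA2 : d2 = c2 ∨ d2 = c2 + pbar ∨ d2 + pbar = c2 := by
      rcases hc2 with h | ⟨h, hs⟩ | ⟨h, hs⟩ <;> rcases hd2 with h' | ⟨h', hs'⟩ | ⟨h', hs'⟩ <;>
        omega
    clear hc1 hc2 hd1 hd2
    have hcase : (d1 = c1 ∧ d2 = c2) ∨ (d1 = c1 + pbar ∧ d2 = c2 + pbar) ∨
        (d1 + pbar = c1 ∧ d2 + pbar = c2) := by omega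
    rcases hcase with ⟨e1, e2⟩ | ⟨e1, e2⟩ | ⟨e1, e2⟩
    · exact hnorect ⟨v + i, c1, v + j, c2, by omega, by omega, by omega, by omega,
        by omega, hne, hac1, hac2, e1 ▸ had1, e2 ▸ had2⟩
    · have s1 : a (v + i + pbar) d1 = true := by
        rw [e1, hshift (v + i) c1 (by omega) hc1pp]; exact hac1
      have s2 : a (v + i + pbar) d2 = true := by
        rw [e2, hshift (v + i) c2 (by omega) hc2pp]; exact hac2
      exact hnorect ⟨v + i + pbar, d1, v + j, d2, by omega, by omega, by omega, by omega,
        by omega, by omega, s1, s2, had1, had2⟩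
    · have s1 : a (v + j + pbar) c1 = true := by
        rw [← e1, hshift (v + j) d1 (by omega) hd1pp]; exact had1
      have s2 : a (v + j + pbar) c2 = true := by
        rw [← e2, hshift (v + j) d2 (by omega) hd2pp]; exact had2
      exact hnorect ⟨v + i, c1, v + j + pbar, c2, by omega, by omega, by omega, by omega,
        by omega, hne, hac1, hac2, s1, s2⟩
  refine ⟨hrect, ?_⟩
  intro i j hi1 hi2 hj1 hj2 hij
  by_contra hcard
  push_neg at hcard
  obtain ⟨k, hk, l, hl, hkl⟩ := Finset.one_lt_card.mp hcard
  simp only [Finset.mem_filter, Finset.mem_Icc] at hk hl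
  obtain ⟨⟨hk1, hk2⟩, hBik, hBjk⟩ := hk
  obtain ⟨⟨hl1, hl2⟩, hBil, hBjl⟩ := hl
  rcases Nat.lt_or_ge i j with hij' | hij'
  · rcases Nat.lt_or_ge k l with hkl' | hkl'
    · exact hrect ⟨i, j, k, l, hi1, hij', hj2, hk1, hkl', hl2, hBik, hBil, hBjk, hBjl⟩
    · exact hrect ⟨i, j, l, k, hi1, hij', hj2, hl1, by omega, hk2, hBil, hBik, hBjl, hBjk⟩
  · have hji : j < i := by omega
    rcases Nat.lt_or_ge k l with hkl' | hkl'
    · exact hrect ⟨j, i, k, l, hj1, hji, hi2, hk1, hkl', hl2, hBjk, hBjl, hBik, hBil⟩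
    · exact hrect ⟨j, i, l, k, hj1, hji, hi2, hl1, by omega, hk2, hBjl, hBjk, hBil, hBik⟩
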